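/- For every γ ∈ ℝ and h > 0 there exists a constant B_{γ,h} > 0, depending only on γ and h, such that for all x ≥ 1: x^{−(γ+1)} · ∫₁^∞ e^{−ξ²/(2x)} · ξ^γ · |ψ_ξ(h)| dξ ≤ B_{γ,h} · x^{−(γ + 1/2)}. -/

import Mathlib

open MeasureTheory Real Set

/-- `ψ_ξ(h) = ∫_0^∞ exp (-w²/(2h) - ξ cosh w) sinh w sin (πw/h) dw`. -/
noncomputable def psi (h ξ : ℝ) : ℝ :=
  ∫ w in Set.Ioi (0:ℝ),
    Real.exp (-w^2/(2*h) - ξ * Real.cosh w) * Real.sinh w * Real.sin (Real.pi * w / h)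

/-- Yor's Asia density `α_{ν,h}(x) = e^{-x/2} ∫_0^∞ y^ν e^{-x y²/2} ψ_{xy}(h) dy`. -/
noncomputable def asiaDensity (ν h x : ℝ) : ℝ :=
  Real.exp (-x/2) * ∫ y in Set.Ioi (0:ℝ), y ^ ν * Real.exp (-x*y^2/2) * psi h (x*y)

/-- The key derivative computation: `d/dw (-exp(-ξ cosh w)/ξ) = exp(-ξ cosh w) sinh w`. -/
lemma hasDerivAt_aux (ξ : ℝ) (hξ : 0 < ξ) (w : ℝ) :
    HasDerivAt (fun w => -Real.exp (-ξ * Real.cosh w) / ξ)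
      (Real.exp (-ξ * Real.cosh w) * Real.sinh w) w := by
  have h1 : HasDerivAt (fun w => -ξ * Real.cosh w) (-ξ * Real.sinh w) w :=
    (Real.hasDerivAt_cosh w).const_mul (-ξ)
  have h2 : HasDerivAt (fun w => Real.exp (-ξ * Real.cosh w))
      (Real.exp (-ξ * Real.cosh w) * (-ξ * Real.sinh w)) w := h1.exp
  have h3 := (h2.neg).div_const ξ
  refine h3.congr_deriv ?_
  rw [div_eq_iff hξ.ne']
  ring

lemma tendsto_aux (ξ : ℝ) (hξ : 0 < ξ) :
    Filter.Tendsto (fun w => -Real.exp (-ξ * Real.cosh w) / ξ) Filter.atTop (nhds 0) := by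
  have hcosh : Filter.Tendsto Real.cosh Filter.atTop Filter.atTop := by
    apply Filter.tendsto_atTop_mono (fun x => ?_)
      ((Real.tendsto_exp_atTop.atTop_div_const (by norm_num : (0:ℝ) < 2)))
    rw [Real.cosh_eq]
    have := (Real.exp_pos (-x)).le
    linarith
  have h1 : Filter.Tendsto (fun w : ℝ => -ξ * Real.cosh w) Filter.atTop Filter.atBot := by
    apply Filter.Tendsto.neg_mul_atTop (neg_neg_iff_pos.mpr hξ) tendsto_const_nhds hcosh
  have h2 : Filter.Tendsto (fun w : ℝ => Real.exp (-ξ * Real.cosh w)) Filter.atTop (nhds 0) :=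
    Real.tendsto_exp_atBot.comp h1
  have := (h2.neg).div_const ξ
  simpa using this

/-- Integrability of the majorant. -/
lemma integrableOn_aux (ξ : ℝ) (hξ : 0 < ξ) :
    IntegrableOn (fun w => Real.exp (-ξ * Real.cosh w) * Real.sinh w) (Set.Ioi (0:ℝ)) := by
  apply integrableOn_Ioi_deriv_of_nonneg' (g := fun w => -Real.exp (-ξ * Real.cosh w) / ξ)
    (fun w _ => hasDerivAt_aux ξ hξ w)
    (fun w hw => mul_nonneg (Real.exp_pos _).le (Real.sinh_nonneg_iff.mpr (le_of_lt hw)))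
    (tendsto_aux ξ hξ)

lemma integral_aux (ξ : ℝ) (hξ : 0 < ξ) :
    ∫ w in Set.Ioi (0:ℝ), Real.exp (-ξ * Real.cosh w) * Real.sinh w = Real.exp (-ξ) / ξ := by
  rw [integral_Ioi_of_hasDerivAt_of_nonneg' (fun w _ => hasDerivAt_aux ξ hξ w)
    (fun w hw => mul_nonneg (Real.exp_pos _).le (Real.sinh_nonneg_iff.mpr (le_of_lt hw)))
    (tendsto_aux ξ hξ)]
  simp [Real.cosh_zero]
  ring

/-- The key pointwise bound on `ψ`. -/
lemma abs_psi_le (h ξ : ℝ) (hh : 0 < h) (hξ : 1 ≤ ξ) : |psi h ξ| ≤ Real.exp (-ξ) := by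
  have hξ0 : (0:ℝ) < ξ := lt_of_lt_of_le one_pos hξ
  have step1 : |psi h ξ| ≤ ∫ w in Set.Ioi (0:ℝ),
      |Real.exp (-w^2/(2*h) - ξ * Real.cosh w) * Real.sinh w * Real.sin (Real.pi * w / h)| := by
    have := norm_integral_le_integral_norm (μ := volume.restrict (Set.Ioi (0:ℝ)))
      (f := fun w => Real.exp (-w^2/(2*h) - ξ * Real.cosh w) * Real.sinh w
        * Real.sin (Real.pi * w / h))
    simpa only [psi, Real.norm_eq_abs] using this
  have step2 : ∫ w in Set.Ioi (0:ℝ),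
      |Real.exp (-w^2/(2*h) - ξ * Real.cosh w) * Real.sinh w * Real.sin (Real.pi * w / h)|
      ≤ ∫ w in Set.Ioi (0:ℝ), Real.exp (-ξ * Real.cosh w) * Real.sinh w := by
    apply integral_mono_of_nonneg
    · exact Filter.Eventually.of_forall fun w => abs_nonneg _
    · exact integrableOn_aux ξ hξ0
    · rw [Filter.EventuallyLE, ae_restrict_iff' measurableSet_Ioi]
      apply Filter.Eventually.of_forall
      intro w hw
      have hw0 : 0 < w := hw
      have hsinh : 0 ≤ Real.sinh w := Real.sinh_nonneg_iff.mpr hw0.le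
      rw [abs_mul, abs_mul, Real.abs_exp]
      calc Real.exp (-w^2/(2*h) - ξ * Real.cosh w) * |Real.sinh w| * |Real.sin (Real.pi * w / h)|
          ≤ Real.exp (-w^2/(2*h) - ξ * Real.cosh w) * |Real.sinh w| * 1 := by
            apply mul_le_mul_of_nonneg_left (Real.abs_sin_le_one _) (by positivity)
        _ = Real.exp (-w^2/(2*h) - ξ * Real.cosh w) * Real.sinh w := by
            rw [mul_one, abs_of_nonneg hsinh]
        _ ≤ Real.exp (-ξ * Real.cosh w) * Real.sinh w := by
            apply mul_le_mul_of_nonneg_right _ hsinh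
            apply Real.exp_le_exp.mpr
            have h0 : 0 ≤ w^2/(2*h) := by positivity
            have : -w^2/(2*h) ≤ 0 := by rw [neg_div]; linarith
            linarith
  calc |psi h ξ| ≤ ∫ w in Set.Ioi (0:ℝ), Real.exp (-ξ * Real.cosh w) * Real.sinh w :=
        le_trans step1 step2
    _ = Real.exp (-ξ) / ξ := integral_aux ξ hξ0
    _ ≤ Real.exp (-ξ) := by
        rw [div_le_iff₀ hξ0]
        nlinarith [Real.exp_pos (-ξ)]

/-- There is a constant `B_{γ,h} > 0` such that for all `x ≥ 1`,
`x^{-(γ+1)} ∫_1^∞ e^{-ξ²/(2x)} ξ^γ |ψ_ξ(h)| dξ ≤ B_{γ,h} x^{-(γ+1/2)}`. -/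
theorem psi_inner_integral_majorization (γ h : ℝ) (hh : 0 < h) :
    ∃ B : ℝ, 0 < B ∧ ∀ x : ℝ, 1 ≤ x →
      x ^ (-(γ+1)) * ∫ ξ in Set.Ioi (1:ℝ), Real.exp (-ξ^2/(2*x)) * ξ ^ γ * |psi h ξ|
        ≤ B * x ^ (-(γ + 1/2)) := by
  -- majorant: ξ ↦ ξ^(max γ 0) * exp(-ξ), integrable on Ioi 1
  set γ' := max γ 0 with hγ'
  have hγ'0 : 0 ≤ γ' := le_max_right _ _
  have hmaj : IntegrableOn (fun ξ : ℝ => ξ ^ γ' * Real.exp (-ξ)) (Set.Ioi (1:ℝ)) := by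
    have h0 := integrableOn_rpow_mul_exp_neg_rpow (p := 1) (s := γ') (by linarith) one_pos
    have h1 : IntegrableOn (fun ξ : ℝ => ξ ^ γ' * Real.exp (-ξ)) (Set.Ioi (0:ℝ)) := by
      apply h0.congr_fun (fun x hx => ?_) measurableSet_Ioi
      rw [Real.rpow_one]
    exact h1.mono_set (Set.Ioi_subset_Ioi (by norm_num))
  set C := ∫ ξ in Set.Ioi (1:ℝ), ξ ^ γ' * Real.exp (-ξ) with hC
  have hC0 : 0 ≤ C := by
    apply setIntegral_nonneg measurableSet_Ioi
    intro ξ hξ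
    have : (0:ℝ) < ξ := lt_trans one_pos hξ
    positivity
  refine ⟨C + 1, by linarith, fun x hx => ?_⟩
  have hx0 : (0:ℝ) < x := lt_of_lt_of_le one_pos hx
  -- bound the integral by C
  have hbound : (∫ ξ in Set.Ioi (1:ℝ), Real.exp (-ξ^2/(2*x)) * ξ ^ γ * |psi h ξ|) ≤ C := by
    apply integral_mono_of_nonneg
    · rw [Filter.EventuallyLE, ae_restrict_iff' measurableSet_Ioi]
      apply Filter.Eventually.of_forall
      intro ξ hξ
      have : (0:ℝ) < ξ := lt_trans one_pos hξ
      positivity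
    · exact hmaj
    · rw [Filter.EventuallyLE, ae_restrict_iff' measurableSet_Ioi]
      apply Filter.Eventually.of_forall
      intro ξ hξ
      have hξ1 : (1:ℝ) ≤ ξ := le_of_lt hξ
      have hξ0 : (0:ℝ) < ξ := lt_of_lt_of_le one_pos hξ1
      calc Real.exp (-ξ^2/(2*x)) * ξ ^ γ * |psi h ξ|
          ≤ 1 * ξ ^ γ * Real.exp (-ξ) := by
            apply mul_le_mul
            · apply mul_le_mul_of_nonneg_right _ (Real.rpow_nonneg hξ0.le _)
              apply Real.exp_le_one_iff.mpr
              have h2x : (0:ℝ) < 2 * x := by linarith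
              have h2 : 0 ≤ ξ^2/(2*x) := by positivity
              rw [neg_div]; linarith
            · exact abs_psi_le h ξ hh hξ1
            · exact abs_nonneg _
            · positivity
        _ = ξ ^ γ * Real.exp (-ξ) := by ring
        _ ≤ ξ ^ γ' * Real.exp (-ξ) := by
            apply mul_le_mul_of_nonneg_right _ (Real.exp_pos _).le
            exact Real.rpow_le_rpow_of_exponent_le hξ1 (le_max_left _ _)
  have hIpos : 0 ≤ ∫ ξ in Set.Ioi (1:ℝ), Real.exp (-ξ^2/(2*x)) * ξ ^ γ * |psi h ξ| := by
    apply setIntegral_nonneg measurableSet_Ioi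
    intro ξ hξ
    have : (0:ℝ) < ξ := lt_trans one_pos hξ
    positivity
  have hxpow : x ^ (-(γ+1)) ≤ x ^ (-(γ + 1/2)) :=
    Real.rpow_le_rpow_of_exponent_le hx (by linarith)
  calc x ^ (-(γ+1)) * ∫ ξ in Set.Ioi (1:ℝ), Real.exp (-ξ^2/(2*x)) * ξ ^ γ * |psi h ξ|
      ≤ x ^ (-(γ+1)) * C := by
        apply mul_le_mul_of_nonneg_left hbound (Real.rpow_nonneg hx0.le _)
    _ ≤ x ^ (-(γ + 1/2)) * C :=
        mul_le_mul_of_nonneg_right hxpow hC0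
    _ ≤ (C + 1) * x ^ (-(γ + 1/2)) := by
        rw [mul_comm]
        apply mul_le_mul_of_nonneg_right (by linarith) (Real.rpow_nonneg hx0.le _)
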